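/- Let 0 < j₁ < j₂ with α⁻(j₁) ≥ 1 (hence also α⁻(j₂) ≥ 1, since α⁻ is increasing). For i = 1, 2, let H̄_{jᵢ} be the unique H ≥ H_{jᵢ}^{cr} with ∫₀¹ m⁻_H(x) dx = 1, set m_{jᵢ} := m⁻_{H̄_{jᵢ}} and p_{jᵢ} := ∫₀¹ jᵢ / m_{jᵢ}(y) dy. Then p_{j₁} < p_{j₂}. -/

import Mathlib

open MeasureTheory

/-- `F j` is strictly decreasing on `(0, j^(2/3)]`. -/
lemma F_anti {j s t : ℝ} (hj : 0 < j) (hs : 0 < s) (hst : s < t)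
    (ht : t ≤ j ^ ((2:ℝ)/3)) :
    j ^ 2 / (2 * t ^ 2) + t < j ^ 2 / (2 * s ^ 2) + s := by
  have ht0 : 0 < t := hs.trans hst
  have hcube : (j ^ ((2:ℝ)/3)) ^ (3:ℕ) = j ^ (2:ℕ) := by
    rw [← Real.rpow_natCast (j ^ ((2:ℝ)/3)) 3, ← Real.rpow_mul hj.le,
      ← Real.rpow_natCast j 2]
    norm_num
  have hcap : (0:ℝ) < j ^ ((2:ℝ)/3) := Real.rpow_pos_of_pos hj _
  have hscap : s ≤ j ^ ((2:ℝ)/3) := (hst.le.trans ht)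
  have hstj : s * t ^ 2 ≤ j ^ 2 := by
    have h1 : t ^ 2 ≤ (j ^ ((2:ℝ)/3)) ^ 2 := by nlinarith
    have h2 : s * t ^ 2 ≤ j ^ ((2:ℝ)/3) * (j ^ ((2:ℝ)/3)) ^ 2 :=
      mul_le_mul hscap h1 (by positivity) hcap.le
    have h3 : j ^ ((2:ℝ)/3) * (j ^ ((2:ℝ)/3)) ^ 2 = (j ^ ((2:ℝ)/3)) ^ (3:ℕ) := by ring
    rw [h3, hcube] at h2
    exact h2
  have h6 : 2 * s ^ 2 * t ^ 2 < j ^ 2 * (t + s) := by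
    nlinarith [mul_le_mul_of_nonneg_right hstj (by positivity : (0:ℝ) ≤ t + s),
      mul_lt_mul_of_pos_left hst (mul_pos hs (mul_pos ht0 ht0))]
  rw [div_add' _ _ _ (by positivity), div_add' _ _ _ (by positivity),
    div_lt_div_iff₀ (by positivity) (by positivity)]
  nlinarith [mul_pos (sub_pos.2 hst) (sub_pos.2 h6)]

lemma branch_le {j s t : ℝ} (hj : 0 < j) (hs : 0 < s) (hscap : s ≤ j ^ ((2:ℝ)/3))
    (ht : 0 < t) (htcap : t ≤ j ^ ((2:ℝ)/3))
    (h : j ^ 2 / (2 * s ^ 2) + s ≤ j ^ 2 / (2 * t ^ 2) + t) : t ≤ s := by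
  by_contra hc
  push_neg at hc
  exact absurd (F_anti hj hs hc htcap) (by linarith)

lemma branch_lt {j s t : ℝ} (hj : 0 < j) (hs : 0 < s) (hscap : s ≤ j ^ ((2:ℝ)/3))
    (ht : 0 < t) (htcap : t ≤ j ^ ((2:ℝ)/3))
    (h : j ^ 2 / (2 * s ^ 2) + s < j ^ 2 / (2 * t ^ 2) + t) : t < s := by
  rcases lt_trichotomy t s with h' | h' | h'
  · exact h'
  · exfalso; rw [h'] at h; exact lt_irrefl _ h
  · exact absurd (F_anti hj hs h' htcap) (by linarith)

/-- single-crossing propagation -/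
lemma propagate {j₁ j₂ H₁ H₂ v v' a a' b b' : ℝ}
    (hj₁ : 0 < j₁) (hj₁₂ : j₁ < j₂)
    (ha : 0 < a) (ha' : 0 < a') (hb : 0 < b) (hb' : 0 < b')
    (hacap : a ≤ j₁ ^ ((2:ℝ)/3)) (ha'cap : a' ≤ j₁ ^ ((2:ℝ)/3))
    (hbcap : b ≤ j₂ ^ ((2:ℝ)/3)) (hb'cap : b' ≤ j₂ ^ ((2:ℝ)/3))
    (e1 : j₁ ^ 2 / (2 * a ^ 2) + a = H₁ - v)
    (e1' : j₁ ^ 2 / (2 * a' ^ 2) + a' = H₁ - v')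
    (e2 : j₂ ^ 2 / (2 * b ^ 2) + b = H₂ - v)
    (e2' : j₂ ^ 2 / (2 * b' ^ 2) + b' = H₂ - v')
    (hv : v ≤ v') (hba : b ≤ a) : b' ≤ a' := by
  have hj₂ : 0 < j₂ := hj₁.trans hj₁₂
  have hcap12 : j₁ ^ ((2:ℝ)/3) ≤ j₂ ^ ((2:ℝ)/3) :=
    Real.rpow_le_rpow hj₁.le hj₁₂.le (by norm_num)
  -- a ≤ a'
  have haa' : a ≤ a' := branch_le hj₁ ha' ha'cap ha hacap (by linarith)
  -- F_{j₁} b ≥ F_{j₁} a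
  have hFba : j₁ ^ 2 / (2 * a ^ 2) + a ≤ j₁ ^ 2 / (2 * b ^ 2) + b := by
    rcases eq_or_lt_of_le hba with h | h
    · rw [h]
    · exact (F_anti hj₁ hb h hacap).le
  -- (j₂²-j₁²)/(2a'²) ≤ (j₂²-j₁²)/(2b²)
  have hdiv : (j₂ ^ 2 - j₁ ^ 2) / (2 * a' ^ 2) ≤ (j₂ ^ 2 - j₁ ^ 2) / (2 * b ^ 2) := by
    apply div_le_div_of_nonneg_left (by nlinarith) (by positivity)
    nlinarith
  have hsplit1 : (j₂ ^ 2 - j₁ ^ 2) / (2 * a' ^ 2)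
      = j₂ ^ 2 / (2 * a' ^ 2) - j₁ ^ 2 / (2 * a' ^ 2) := by ring
  have hsplit2 : (j₂ ^ 2 - j₁ ^ 2) / (2 * b ^ 2)
      = j₂ ^ 2 / (2 * b ^ 2) - j₁ ^ 2 / (2 * b ^ 2) := by ring
  have key : j₂ ^ 2 / (2 * a' ^ 2) + a' ≤ j₂ ^ 2 / (2 * b' ^ 2) + b' := by
    linarith
  exact branch_le hj₂ ha' (ha'cap.trans hcap12) hb' hb'cap key

/-- pointwise identity for the difference of momenta densities -/
lemma key_id {j₁ j₂ H₁ H₂ v a b : ℝ} (hj₁ : 0 < j₁) (hj₂ : 0 < j₂)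
    (ha : 0 < a) (hb : 0 < b)
    (e1 : j₁ ^ 2 / (2 * a ^ 2) + a = H₁ - v)
    (e2 : j₂ ^ 2 / (2 * b ^ 2) + b = H₂ - v) :
    j₂ / b - j₁ / a
      = (2 * (H₂ - H₁) + 2 * (a - b)) * (j₁ / a + j₂ / b)⁻¹ := by
  have hs : 0 < j₁ / a + j₂ / b := by positivity
  have f1 : j₁ ^ 2 / a ^ 2 = 2 * (H₁ - v) - 2 * a := by
    have h : j₁ ^ 2 / (2 * a ^ 2) = H₁ - v - a := by linarith
    calc j₁ ^ 2 / a ^ 2 = 2 * (j₁ ^ 2 / (2 * a ^ 2)) := by ring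
    _ = 2 * (H₁ - v) - 2 * a := by rw [h]; ring
  have f2 : j₂ ^ 2 / b ^ 2 = 2 * (H₂ - v) - 2 * b := by
    have h : j₂ ^ 2 / (2 * b ^ 2) = H₂ - v - b := by linarith
    calc j₂ ^ 2 / b ^ 2 = 2 * (j₂ ^ 2 / (2 * b ^ 2)) := by ring
    _ = 2 * (H₂ - v) - 2 * b := by rw [h]; ring
  have key : (j₂ / b - j₁ / a) * (j₁ / a + j₂ / b) = 2 * (H₂ - H₁) + 2 * (a - b) := by
    have expand : (j₂ / b - j₁ / a) * (j₁ / a + j₂ / b)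
        = j₂ ^ 2 / b ^ 2 - j₁ ^ 2 / a ^ 2 := by
      field_simp
      ring
    rw [expand, f1, f2]
    ring
  rw [← key, mul_inv_cancel_right₀ hs.ne']

set_option maxHeartbeats 2000000

lemma int_of_bdd {f : ℝ → ℝ}
    (hf : AEMeasurable f (volume.restrict (Set.Ioc (0:ℝ) 1))) {C : ℝ}
    (h : ∀ᵐ x ∂(volume.restrict (Set.Ioc (0:ℝ) 1)), |f x| ≤ C) :
    IntegrableOn f (Set.Ioc (0:ℝ) 1) :=
  Integrable.mono' (integrable_const C) hf.aestronglyMeasurable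
    (by simpa [Real.norm_eq_abs] using h)

/-- strict monotonicity of the current-to-momentum map in the
high-current regime: with the notation of STATEMENT 18 and
`p_{jᵢ} := ∫₀¹ jᵢ / m⁻_{H̄_{jᵢ}}`, one has `p_{j₁} < p_{j₂}`. -/
theorem stmt_19
    (V : ℝ → ℝ) (hVc : Continuous V) (hVp : Function.Periodic V 1)
    (M : ℝ) (hM : IsGreatest (Set.range V) M)
    (mm : ℝ → ℝ → ℝ → ℝ)
    (hmm : ∀ j H x, 0 < j → M + 3 / 2 * j ^ ((2:ℝ)/3) ≤ H →
      0 < mm j H x ∧ mm j H x ≤ j ^ ((2:ℝ)/3) ∧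
      j ^ 2 / (2 * (mm j H x) ^ 2) + mm j H x = H - V x)
    (j₁ j₂ : ℝ) (hj₁ : 0 < j₁) (hj₁₂ : j₁ < j₂)
    (hα : 1 ≤ ∫ x in (0:ℝ)..1, mm j₁ (M + 3 / 2 * j₁ ^ ((2:ℝ)/3)) x)
    (H₁ H₂ : ℝ)
    (hH₁cr : M + 3 / 2 * j₁ ^ ((2:ℝ)/3) ≤ H₁)
    (hH₁ : (∫ x in (0:ℝ)..1, mm j₁ H₁ x) = 1)
    (hH₂cr : M + 3 / 2 * j₂ ^ ((2:ℝ)/3) ≤ H₂)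
    (hH₂ : (∫ x in (0:ℝ)..1, mm j₂ H₂ x) = 1) :
    (∫ y in (0:ℝ)..1, j₁ / mm j₁ H₁ y) < (∫ y in (0:ℝ)..1, j₂ / mm j₂ H₂ y) := by
  classical
  have hj₂ : 0 < j₂ := hj₁.trans hj₁₂
  set m1 : ℝ → ℝ := mm j₁ H₁ with hm1def
  set m2 : ℝ → ℝ := mm j₂ H₂ with hm2def
  have A1 : ∀ x, 0 < m1 x ∧ m1 x ≤ j₁ ^ ((2:ℝ)/3) ∧
      j₁ ^ 2 / (2 * (m1 x) ^ 2) + m1 x = H₁ - V x := fun x => hmm j₁ H₁ x hj₁ hH₁cr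
  have A2 : ∀ x, 0 < m2 x ∧ m2 x ≤ j₂ ^ ((2:ℝ)/3) ∧
      j₂ ^ 2 / (2 * (m2 x) ^ 2) + m2 x = H₂ - V x := fun x => hmm j₂ H₂ x hj₂ hH₂cr
  have hm1pos : ∀ x, 0 < m1 x := fun x => (A1 x).1
  have hm2pos : ∀ x, 0 < m2 x := fun x => (A2 x).1
  have hm1cap : ∀ x, m1 x ≤ j₁ ^ ((2:ℝ)/3) := fun x => (A1 x).2.1
  have hm2cap : ∀ x, m2 x ≤ j₂ ^ ((2:ℝ)/3) := fun x => (A2 x).2.1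
  have he1 : ∀ x, j₁ ^ 2 / (2 * (m1 x) ^ 2) + m1 x = H₁ - V x := fun x => (A1 x).2.2
  have he2 : ∀ x, j₂ ^ 2 / (2 * (m2 x) ^ 2) + m2 x = H₂ - V x := fun x => (A2 x).2.2
  have hVM : ∀ x, V x ≤ M := fun x => hM.2 ⟨x, rfl⟩
  have hcap1 : (0:ℝ) < j₁ ^ ((2:ℝ)/3) := Real.rpow_pos_of_pos hj₁ _
  have hcap2 : (0:ℝ) < j₂ ^ ((2:ℝ)/3) := Real.rpow_pos_of_pos hj₂ _
  have hcap12 : j₁ ^ ((2:ℝ)/3) ≤ j₂ ^ ((2:ℝ)/3) :=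
    Real.rpow_le_rpow hj₁.le hj₁₂.le (by norm_num)
  -- minimum of V on [0,1]
  obtain ⟨x₀, hx₀mem, hx₀⟩ := isCompact_Icc.exists_isMinOn
    (Set.nonempty_Icc.mpr zero_le_one) hVc.continuousOn
  set v0 := V x₀ with hv0def
  have hv0M : v0 ≤ M := hVM x₀
  have hv0le : ∀ x ∈ Set.Icc (0:ℝ) 1, v0 ≤ V x := fun x hx => hx₀ hx
  have hH₁v0 : 0 < H₁ - v0 := by nlinarith [hcap1]
  have hH₂v0 : 0 < H₂ - v0 := by nlinarith [hcap2]
  -- lower bounds for m1, m2 on [0,1]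
  set c1 : ℝ := j₁ ^ 2 / (2 * j₁ ^ ((2:ℝ)/3) * (H₁ - v0)) with hc1def
  set c2 : ℝ := j₂ ^ 2 / (2 * j₂ ^ ((2:ℝ)/3) * (H₂ - v0)) with hc2def
  have hc1pos : 0 < c1 := by rw [hc1def]; positivity
  have hc2pos : 0 < c2 := by rw [hc2def]; positivity
  have hm1low : ∀ x ∈ Set.Icc (0:ℝ) 1, c1 ≤ m1 x := by
    intro x hx
    have hE := he1 x
    have hm := hm1pos x
    have hcapx := hm1cap x
    have hVx := hv0le x hx
    have h1 : j₁ ^ 2 / (2 * (m1 x) ^ 2) ≤ H₁ - v0 := by linarith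
    have h2 : j₁ ^ 2 ≤ 2 * (m1 x) ^ 2 * (H₁ - v0) := by
      rw [div_le_iff₀ (by positivity)] at h1; linarith
    rw [hc1def, div_le_iff₀ (by positivity)]
    nlinarith [mul_le_mul_of_nonneg_left hcapx
      (by positivity : (0:ℝ) ≤ 2 * m1 x * (H₁ - v0))]
  have hm2low : ∀ x ∈ Set.Icc (0:ℝ) 1, c2 ≤ m2 x := by
    intro x hx
    have hE := he2 x
    have hm := hm2pos x
    have hcapx := hm2cap x
    have hVx := hv0le x hx
    have h1 : j₂ ^ 2 / (2 * (m2 x) ^ 2) ≤ H₂ - v0 := by linarith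
    have h2 : j₂ ^ 2 ≤ 2 * (m2 x) ^ 2 * (H₂ - v0) := by
      rw [div_le_iff₀ (by positivity)] at h1; linarith
    rw [hc2def, div_le_iff₀ (by positivity)]
    nlinarith [mul_le_mul_of_nonneg_left hcapx
      (by positivity : (0:ℝ) ≤ 2 * m2 x * (H₂ - v0))]
  -- measure-theoretic setup
  have hIoc : MeasurableSet (Set.Ioc (0:ℝ) 1) := measurableSet_Ioc
  have hH₁' : ∫ x in Set.Ioc (0:ℝ) 1, m1 x = 1 := by
    rw [← intervalIntegral.integral_of_le zero_le_one]; exact hH₁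
  have hH₂' : ∫ x in Set.Ioc (0:ℝ) 1, m2 x = 1 := by
    rw [← intervalIntegral.integral_of_le zero_le_one]; exact hH₂
  have hm1int : IntegrableOn m1 (Set.Ioc 0 1) := by
    by_contra h
    rw [MeasureTheory.integral_undef h] at hH₁'
    norm_num at hH₁'
  have hm2int : IntegrableOn m2 (Set.Ioc 0 1) := by
    by_contra h
    rw [MeasureTheory.integral_undef h] at hH₂'
    norm_num at hH₂'
  have hm1meas : AEMeasurable m1 (volume.restrict (Set.Ioc (0:ℝ) 1)) :=
    hm1int.aestronglyMeasurable.aemeasurable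
  have hm2meas : AEMeasurable m2 (volume.restrict (Set.Ioc (0:ℝ) 1)) :=
    hm2int.aestronglyMeasurable.aemeasurable
  have haemem : ∀ᵐ x ∂(volume.restrict (Set.Ioc (0:ℝ) 1)), x ∈ Set.Ioc (0:ℝ) 1 :=
    ae_restrict_mem hIoc
  -- the main functions
  set sfun : ℝ → ℝ := fun x => j₁ / m1 x + j₂ / m2 x with hsfundef
  have hspos : ∀ x, 0 < sfun x := fun x =>
    add_pos (div_pos hj₁ (hm1pos x)) (div_pos hj₂ (hm2pos x))
  set g : ℝ → ℝ := fun x => (sfun x)⁻¹ with hgdef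
  have hgpos : ∀ x, 0 < g x := fun x => inv_pos.2 (hspos x)
  set d : ℝ → ℝ := fun x => m1 x - m2 x with hddef
  have hsmeas : AEMeasurable sfun (volume.restrict (Set.Ioc (0:ℝ) 1)) :=
    (aemeasurable_const.div hm1meas).add (aemeasurable_const.div hm2meas)
  have hgmeas : AEMeasurable g (volume.restrict (Set.Ioc (0:ℝ) 1)) := hsmeas.inv
  have hdmeas : AEMeasurable d (volume.restrict (Set.Ioc (0:ℝ) 1)) := hm1meas.sub hm2meas
  have hdint : IntegrableOn d (Set.Ioc 0 1) := hm1int.sub hm2int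
  have hd0 : ∫ x in Set.Ioc (0:ℝ) 1, d x = 0 := by
    rw [hddef, integral_sub hm1int hm2int, hH₁', hH₂']; ring
  -- bound on g
  have hglob : ∀ x, g x ≤ (j₁ / j₁ ^ ((2:ℝ)/3))⁻¹ := by
    intro x
    have h1 : j₁ / j₁ ^ ((2:ℝ)/3) ≤ j₁ / m1 x := by
      gcongr
      · exact hm1pos x
      · exact hm1cap x
    have h2 : j₁ / j₁ ^ ((2:ℝ)/3) ≤ sfun x := by
      have := (div_pos hj₂ (hm2pos x)).le
      rw [hsfundef]; dsimp only; linarith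
    exact inv_anti₀ (by positivity) h2
  have hgint : IntegrableOn g (Set.Ioc 0 1) := by
    apply int_of_bdd hgmeas (C := (j₁ / j₁ ^ ((2:ℝ)/3))⁻¹)
    filter_upwards with x
    rw [abs_of_pos (hgpos x)]
    exact hglob x
  have hdbd : ∀ x, |d x| ≤ j₁ ^ ((2:ℝ)/3) + j₂ ^ ((2:ℝ)/3) := by
    intro x
    rw [hddef, abs_le]
    constructor
    · have := hm1pos x; have := hm2cap x; dsimp only; linarith
    · have := hm2pos x; have := hm1cap x; dsimp only; linarith
  have hdgint : IntegrableOn (fun x => d x * g x) (Set.Ioc 0 1) := by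
    apply int_of_bdd (hdmeas.mul hgmeas)
      (C := (j₁ ^ ((2:ℝ)/3) + j₂ ^ ((2:ℝ)/3)) * (j₁ / j₁ ^ ((2:ℝ)/3))⁻¹)
    filter_upwards with x
    rw [Pi.mul_apply, abs_mul]
    exact mul_le_mul (hdbd x) (by rw [abs_of_pos (hgpos x)]; exact hglob x)
      (abs_nonneg _) (by positivity)
  -- H₂ > H₁
  have hΔH : 0 < H₂ - H₁ := by
    by_contra hc
    push_neg at hc
    have hlt : ∀ x, m1 x < m2 x := by
      intro x
      apply branch_lt hj₂ (hm2pos x) (hm2cap x) (hm1pos x) ((hm1cap x).trans hcap12)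
      have hE1 := he1 x
      have hE2 := he2 x
      have hsplit : j₂ ^ 2 / (2 * (m1 x) ^ 2)
          = j₁ ^ 2 / (2 * (m1 x) ^ 2) + (j₂ ^ 2 - j₁ ^ 2) / (2 * (m1 x) ^ 2) := by ring
      have hpos' : 0 < (j₂ ^ 2 - j₁ ^ 2) / (2 * (m1 x) ^ 2) :=
        div_pos (by nlinarith) (by have := hm1pos x; positivity)
      linarith
    have hneg : ∀ x, 0 ≤ -(d x) := fun x => by
      have := hlt x; rw [hddef]; dsimp only; linarith
    have hint0 : ∫ x in Set.Ioc (0:ℝ) 1, (-(d x)) = 0 := by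
      rw [integral_neg, hd0, neg_zero]
    have hae : (fun x => -(d x)) =ᵐ[volume.restrict (Set.Ioc (0:ℝ) 1)] 0 :=
      (integral_eq_zero_iff_of_nonneg hneg hdint.neg).mp hint0
    have hfalse : ∀ᵐ x ∂(volume.restrict (Set.Ioc (0:ℝ) 1)), False := by
      filter_upwards [hae] with x hx
      have h1 := hlt x
      have h2 : -(d x) = 0 := hx
      rw [hddef] at h2; dsimp only at h2; linarith
    rw [ae_iff] at hfalse
    simp only [not_false_eq_true, Set.setOf_true, Measure.restrict_apply_univ] at hfalse
    rw [Real.volume_Ioc] at hfalse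
    norm_num at hfalse
  -- the correlation inequality : ∫ d g ≥ 0
  have hdg_nonneg : 0 ≤ ∫ x in Set.Ioc (0:ℝ) 1, d x * g x := by
    by_cases hB : ∃ y, m2 y < m1 y
    · obtain ⟨y₀, hy₀⟩ := hB
      have hgnn : ∀ y, 0 ≤ g y := fun y => (hgpos y).le
      have hbdd : BddBelow (g '' {y | m2 y < m1 y}) := by
        refine ⟨0, ?_⟩
        rintro z ⟨y, _, rfl⟩
        exact hgnn y
      set c := sInf (g '' {y | m2 y < m1 y}) with hcdef
      have hcle : ∀ y, m2 y < m1 y → c ≤ g y := fun y hy =>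
        csInf_le hbdd ⟨y, hy, rfl⟩
      have hige : ∀ x, m1 x < m2 x → g x ≤ c := by
        intro x hx
        refine le_csInf ⟨g y₀, ⟨y₀, hy₀, rfl⟩⟩ ?_
        rintro z ⟨y, hy, rfl⟩
        have hVxy : V x ≤ V y := by
          by_contra hVle
          push_neg at hVle
          have := propagate hj₁ hj₁₂ (hm1pos y) (hm1pos x) (hm2pos y) (hm2pos x)
            (hm1cap y) (hm1cap x) (hm2cap y) (hm2cap x) (he1 y) (he1 x) (he2 y) (he2 x)
            hVle.le hy.le
          linarith
        have h1 : m1 x ≤ m1 y :=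
          branch_le hj₁ (hm1pos y) (hm1cap y) (hm1pos x) (hm1cap x)
            (by rw [he1 x, he1 y]; linarith)
        have h2 : m2 x ≤ m2 y :=
          branch_le hj₂ (hm2pos y) (hm2cap y) (hm2pos x) (hm2cap x)
            (by rw [he2 x, he2 y]; linarith)
        have hs12 : sfun y ≤ sfun x := by
          rw [hsfundef]; dsimp only
          gcongr
          · exact hm1pos x
          · exact hm2pos x
        exact inv_anti₀ (hspos y) hs12
      have hpt : ∀ x, 0 ≤ d x * (g x - c) := by
        intro x
        rcases lt_trichotomy (m1 x) (m2 x) with h | h | h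
        · have hd : d x ≤ 0 := by rw [hddef]; dsimp only; linarith
          have hgc : g x - c ≤ 0 := by have := hige x h; linarith
          nlinarith [mul_nonneg (neg_nonneg.2 hd) (neg_nonneg.2 hgc)]
        · have hd : d x = 0 := by rw [hddef]; dsimp only; linarith
          rw [hd, zero_mul]
        · have hd : 0 ≤ d x := by rw [hddef]; dsimp only; linarith
          have hgc : 0 ≤ g x - c := by have := hcle x h; linarith
          exact mul_nonneg hd hgc
      have hint2 : IntegrableOn (fun x => d x * (g x - c)) (Set.Ioc 0 1) := by
        have hfe : (fun x => d x * (g x - c)) = fun x => d x * g x - c * d x := by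
          funext x; ring
        rw [hfe]
        exact hdgint.sub (hdint.const_mul c)
      have heq : ∫ x in Set.Ioc (0:ℝ) 1, d x * g x
          = (∫ x in Set.Ioc (0:ℝ) 1, d x * (g x - c))
            + c * ∫ x in Set.Ioc (0:ℝ) 1, d x := by
        rw [← integral_const_mul, ← integral_add hint2 (hdint.const_mul c)]
        congr 1
        funext x
        ring
      rw [heq, hd0, mul_zero, add_zero]
      exact setIntegral_nonneg hIoc fun x _ => hpt x
    · push_neg at hB
      have hneg : ∀ x, 0 ≤ -(d x) := fun x => by
        have := hB x; rw [hddef]; dsimp only; linarith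
      have hint0 : ∫ x in Set.Ioc (0:ℝ) 1, (-(d x)) = 0 := by
        rw [integral_neg, hd0, neg_zero]
      have hae : (fun x => -(d x)) =ᵐ[volume.restrict (Set.Ioc (0:ℝ) 1)] 0 :=
        (integral_eq_zero_iff_of_nonneg hneg hdint.neg).mp hint0
      have hae2 : (fun x => d x * g x) =ᵐ[volume.restrict (Set.Ioc (0:ℝ) 1)]
          (fun _ => (0:ℝ)) := by
        filter_upwards [hae] with x hx
        have h2 : -(d x) = 0 := hx
        have h3 : d x = 0 := by linarith
        rw [h3, zero_mul]
      rw [integral_congr_ae hae2, integral_const]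
      simp
  -- lower bound on ∫ g
  have hSpos : 0 < j₁ / c1 + j₂ / c2 := add_pos (div_pos hj₁ hc1pos) (div_pos hj₂ hc2pos)
  have hgILB : (j₁ / c1 + j₂ / c2)⁻¹ ≤ ∫ x in Set.Ioc (0:ℝ) 1, g x := by
    have hmono : ∀ x ∈ Set.Ioc (0:ℝ) 1, (j₁ / c1 + j₂ / c2)⁻¹ ≤ g x := by
      intro x hx
      have h1 := hm1low x (Set.Ioc_subset_Icc_self hx)
      have h2 := hm2low x (Set.Ioc_subset_Icc_self hx)
      have hsle : sfun x ≤ j₁ / c1 + j₂ / c2 := by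
        rw [hsfundef]; dsimp only
        gcongr <;> first | exact hc1pos | exact hc2pos | skip
      exact inv_anti₀ (hspos x) hsle
    calc (j₁ / c1 + j₂ / c2)⁻¹
        = ∫ _x in Set.Ioc (0:ℝ) 1, (j₁ / c1 + j₂ / c2)⁻¹ := by
          rw [setIntegral_const, measureReal_def, Real.volume_Ioc]
          norm_num
      _ ≤ ∫ x in Set.Ioc (0:ℝ) 1, g x :=
          setIntegral_mono_on (integrable_const _) hgint hIoc hmono
  have hgI_pos : 0 < ∫ x in Set.Ioc (0:ℝ) 1, g x :=
    lt_of_lt_of_le (by positivity) hgILB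
  -- pointwise identity and conclusion
  have hid : ∀ x, j₂ / m2 x - j₁ / m1 x = (2 * (H₂ - H₁) + 2 * (d x)) * g x := by
    intro x
    rw [hddef, hgdef, hsfundef]
    exact key_id hj₁ hj₂ (hm1pos x) (hm2pos x) (he1 x) (he2 x)
  have hw1int : IntegrableOn (fun x => j₁ / m1 x) (Set.Ioc 0 1) := by
    apply int_of_bdd (aemeasurable_const.div hm1meas) (C := j₁ / c1)
    filter_upwards [haemem] with x hx
    have h1 := hm1low x (Set.Ioc_subset_Icc_self hx)
    simp only [Pi.div_apply]
    rw [abs_of_pos (div_pos hj₁ (hm1pos x))]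
    gcongr

  have hw2int : IntegrableOn (fun x => j₂ / m2 x) (Set.Ioc 0 1) := by
    apply int_of_bdd (aemeasurable_const.div hm2meas) (C := j₂ / c2)
    filter_upwards [haemem] with x hx
    have h2 := hm2low x (Set.Ioc_subset_Icc_self hx)
    simp only [Pi.div_apply]
    rw [abs_of_pos (div_pos hj₂ (hm2pos x))]
    gcongr
  have hdiffeq : ∫ x in Set.Ioc (0:ℝ) 1, (j₂ / m2 x - j₁ / m1 x)
      = 2 * (H₂ - H₁) * (∫ x in Set.Ioc (0:ℝ) 1, g x)
        + 2 * ∫ x in Set.Ioc (0:ℝ) 1, d x * g x := by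
    have hfe : (fun x => j₂ / m2 x - j₁ / m1 x)
        = fun x => 2 * (H₂ - H₁) * g x + 2 * (d x * g x) := by
      funext x
      rw [hid x]
      ring
    rw [hfe, integral_add (hgint.const_mul _) (hdgint.const_mul 2),
      integral_const_mul, integral_const_mul]
  have hpos : 0 < ∫ x in Set.Ioc (0:ℝ) 1, (j₂ / m2 x - j₁ / m1 x) := by
    rw [hdiffeq]
    have h1 : 0 < 2 * (H₂ - H₁) * ∫ x in Set.Ioc (0:ℝ) 1, g x :=
      mul_pos (by linarith) hgI_pos
    linarith
  rw [integral_sub hw2int hw1int] at hpos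
  rw [intervalIntegral.integral_of_le zero_le_one, intervalIntegral.integral_of_le zero_le_one]
  linarith
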